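/- Let (Ω, P) be a probability space, let n ≥ 2 (number of tasks), τ ≥ 1 (number of signature components per task), d ≥ 1 (embedding dimension), let δ ≥ 0, σ² > 0 and κ ∈ ℝ. Fix a pair (k,t), let Z_k be a real random variable and let (Z_{i,s}) for i ∈ {1,…,n}\{k}, s ∈ {1,…,τ} be real random variables, and let E be an event. Assume: (H1) E ⊆ {ω : Z_k(ω) > min over (i,s) with i ≠ k of (Z_{i,s}(ω) + κ)}; (H2) for every θ ≥ d, P(Z_k > θ) ≤ exp(-(θ-d)²/(4d + 2(θ-d))); (H3) for every (i,s) with i ≠ k and every u ≥ 0, P(Z_{i,s} < (1+δ)d − u) ≤ exp(−u²/(2σ²d + (2/3)u)). If moreover δ ≥ max(0, −2κ/d), then P(E) ≤ exp(−dδ²/(4δ + 16)) + (n−1)·τ·exp(−(dδ/2 + κ)²/(2σ²d + (2/3)(dδ/2 + κ))). -/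

import Mathlib

open MeasureTheory Real

/-- **Theorem 3.4 (Bounding Retrieval Error Rate).**
Given `n ≥ 2` tasks and `τ ≥ 1` signature components per task, embedding dimension `d ≥ 1`,
separation factor `δ ≥ 0`, variance proxy `σ2 > 0` and log-volume gap `κ`, if the retrieval
error event `E` forces the correct-cluster Mahalanobis statistic `Zk` to exceed the minimum of
the incorrect-cluster statistics shifted by `κ` (H1), `Zk` satisfies the chi-square right-tail
bound with `d` degrees of freedom (H2), each incorrect statistic satisfies a Bernstein-type
left-tail bound with mean `(1+δ)d` and variance proxy `σ2·d` (H3), and `δ ≥ max(0, -2κ/d)`,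
then `P(E) ≤ exp(-dδ²/(4δ+16)) + (n-1)τ·exp(-(dδ/2+κ)²/(2σ2·d+(2/3)(dδ/2+κ)))`. -/
theorem retrieval_error_rate_bound
    {Ω : Type*} [MeasurableSpace Ω] (P : Measure Ω) [IsProbabilityMeasure P]
    (n τ d : ℕ) (hn : 2 ≤ n) (hτ : 1 ≤ τ) (hd : 1 ≤ d)
    (δ : ℝ) (hδ0 : 0 ≤ δ) (σ2 : ℝ) (hσ2 : 0 < σ2) (κ : ℝ)
    (k : Fin n) (t : Fin τ)
    (Zk : Ω → ℝ) (Z : Fin n → Fin τ → Ω → ℝ) (E : Set Ω)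
    (H1 : E ⊆ {ω | (⨅ p : {p : Fin n × Fin τ // p.1 ≠ k}, (Z p.1.1 p.1.2 ω + κ)) < Zk ω})
    (H2 : ∀ θ : ℝ, (d : ℝ) ≤ θ →
      (P {ω | θ < Zk ω}).toReal ≤ exp (-(θ - d) ^ 2 / (4 * d + 2 * (θ - d))))
    (H3 : ∀ i : Fin n, i ≠ k → ∀ s : Fin τ, ∀ u : ℝ, 0 ≤ u →
      (P {ω | Z i s ω < (1 + δ) * d - u}).toReal ≤
        exp (-u ^ 2 / (2 * σ2 * d + (2 / 3) * u)))
    (hδ : δ ≥ max 0 (-(2 * κ) / d)) :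
    (P E).toReal ≤
      exp (-(d * δ ^ 2) / (4 * δ + 16)) +
        ((n : ℝ) - 1) * τ *
          exp (-(d * δ / 2 + κ) ^ 2 / (2 * σ2 * d + (2 / 3) * (d * δ / 2 + κ))) := by
  have hdpos : (0 : ℝ) < d := by exact_mod_cast hd
  set θ : ℝ := (1 + δ / 2) * d with hθdef
  set u : ℝ := d * δ / 2 + κ with hudef
  have hu0 : 0 ≤ u := by
    have h1 : -(2 * κ) / d ≤ δ := le_trans (le_max_right _ _) hδ
    have h2 : -(2 * κ) ≤ δ * d := (div_le_iff₀ hdpos).mp h1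
    simp only [hudef]; nlinarith
  have hθd : (d : ℝ) ≤ θ := by
    simp only [hθdef]; nlinarith
  -- the pair index type is nonempty
  obtain ⟨j, hj⟩ := Fintype.exists_ne_of_one_lt_card (by simp; omega) k
  haveI : Nonempty {p : Fin n × Fin τ // p.1 ≠ k} := ⟨⟨(j, t), hj⟩⟩
  set A : Set Ω := {ω | θ < Zk ω} with hA
  set B : {p : Fin n × Fin τ // p.1 ≠ k} → Set Ω :=
    fun p => {ω | Z p.1.1 p.1.2 ω < (1 + δ) * d - u} with hB
  have hsub : E ⊆ A ∪ ⋃ p, B p := by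
    intro ω hω
    by_cases hcase : θ < Zk ω
    · exact Or.inl hcase
    · right
      have hinf : (⨅ p : {p : Fin n × Fin τ // p.1 ≠ k}, (Z p.1.1 p.1.2 ω + κ)) < θ :=
        lt_of_lt_of_le (H1 hω) (not_lt.mp hcase)
      obtain ⟨p, hp⟩ := exists_lt_of_ciInf_lt hinf
      refine Set.mem_iUnion.mpr ⟨p, ?_⟩
      have : (1 + δ) * d - u = θ - κ := by simp only [hθdef, hudef]; ring
      simp only [hB, Set.mem_setOf_eq, this]
      linarith
  have hmeas : P E ≤ P A + ∑ p, P (B p) := by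
    calc P E ≤ P (A ∪ ⋃ p, B p) := measure_mono hsub
      _ ≤ P A + P (⋃ p, B p) := measure_union_le _ _
      _ ≤ P A + ∑' p, P (B p) := add_le_add le_rfl (measure_iUnion_le _)
      _ = P A + ∑ p, P (B p) := by rw [tsum_fintype]
  have hfin : P A + ∑ p, P (B p) ≠ ⊤ := by
    apply ENNReal.add_ne_top.mpr
    exact ⟨measure_ne_top _ _, (ENNReal.sum_lt_top.mpr (fun p _ => measure_lt_top _ _)).ne⟩
  have hreal : (P E).toReal ≤ (P A).toReal + ∑ p, (P (B p)).toReal := by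
    have := ENNReal.toReal_mono hfin hmeas
    rwa [ENNReal.toReal_add (measure_ne_top _ _)
      (ENNReal.sum_lt_top.mpr (fun p _ => measure_lt_top _ _)).ne, ENNReal.toReal_sum
      (fun p _ => measure_ne_top _ _)] at this
  -- bound the first term
  have hAbound : (P A).toReal ≤ exp (-(d * δ ^ 2) / (4 * δ + 16)) := by
    have h2 := H2 θ hθd
    have heq : -(θ - d) ^ 2 / (4 * d + 2 * (θ - d)) = -(d * δ ^ 2) / (4 * δ + 16) := by
      rw [div_eq_div_iff (by simp only [hθdef]; nlinarith) (by nlinarith)]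
      simp only [hθdef]; ring
    rwa [heq] at h2
  -- bound the sum
  have hBbound : (∑ p : {p : Fin n × Fin τ // p.1 ≠ k}, (P (B p)).toReal) ≤
      ((n : ℝ) - 1) * τ * exp (-u ^ 2 / (2 * σ2 * d + (2 / 3) * u)) := by
    have hcard : Fintype.card {p : Fin n × Fin τ // p.1 ≠ k} = (n - 1) * τ := by
      have e : {p : Fin n × Fin τ // p.1 ≠ k} ≃ {i : Fin n // i ≠ k} × Fin τ :=
        { toFun := fun p => (⟨p.1.1, p.2⟩, p.1.2)
          invFun := fun q => ⟨(q.1.1, q.2), q.1.2⟩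
          left_inv := fun p => rfl
          right_inv := fun q => rfl }
      rw [Fintype.card_congr e, Fintype.card_prod, Fintype.card_subtype_compl]
      simp
    calc (∑ p : {p : Fin n × Fin τ // p.1 ≠ k}, (P (B p)).toReal)
        ≤ ∑ p : {p : Fin n × Fin τ // p.1 ≠ k},
            exp (-u ^ 2 / (2 * σ2 * d + (2 / 3) * u)) := by
          apply Finset.sum_le_sum
          intro p _
          exact H3 p.1.1 p.2 p.1.2 u hu0
      _ = ((n : ℝ) - 1) * τ * exp (-u ^ 2 / (2 * σ2 * d + (2 / 3) * u)) := by
          rw [Finset.sum_const, Finset.card_univ, hcard, nsmul_eq_mul]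
          push_cast [Nat.cast_sub (by omega : 1 ≤ n)]
          ring
  calc (P E).toReal ≤ (P A).toReal + ∑ p, (P (B p)).toReal := hreal
    _ ≤ _ := add_le_add hAbound hBbound
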